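/- For every integer α ≥ 3, one has κ(α² − 2, α − 1, α² − 3) = 2α − 3 and κ(α² − 2, α − 2, α² − 5) = 2α − 2; in particular κ(α²−2, α−2, α²−5) > κ(α²−2, α−1, α²−3). -/
import Mathlib

noncomputable section

/-- The Brill--Noether number `ρ(g,r,d) = g - (r+1)(g-d+r)`. -/
def rho (g r d : ℤ) : ℤ := g - (r + 1) * (g - d + r)

/-- Pflueger's Brill--Noether number `ρ_k(g,r,d)`, the maximum of
`ρ(g,r-ℓ,d) - ℓk` over integers `0 ≤ ℓ ≤ min r (g-d+r-1)`. -/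
def rhoK (g r d k : ℤ) : ℤ :=
  sSup ((fun ℓ : ℤ => rho g (r - ℓ) d - ℓ * k) '' Set.Icc 0 (min r (g - d + r - 1)))

/-- `κ(g,r,d)`: the greatest integer `k ≥ 1` such that `ρ_k(g,r,d) ≥ 0`. -/
def kappa (g r d : ℤ) : ℤ := sSup {k : ℤ | 1 ≤ k ∧ 0 ≤ rhoK g r d k}

/-- `d_max(g,r) = r + ⌈gr/(r+1)⌉ - 1`, the largest `d` with `ρ(g,r,d) < 0`. -/
def dmax (g r : ℤ) : ℤ := r + ⌈((g : ℚ) * r) / ((r : ℚ) + 1)⌉ - 1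

lemma rhoK_ge (g r d k ℓ : ℤ) (h0 : 0 ≤ ℓ) (h1 : ℓ ≤ min r (g - d + r - 1)) :
    rho g (r - ℓ) d - ℓ * k ≤ rhoK g r d k :=
  le_csSup (((Set.finite_Icc _ _).image _).bddAbove)
    (Set.mem_image_of_mem _ (Set.mem_Icc.2 ⟨h0, h1⟩))

lemma rhoK_le (g r d k B : ℤ) (h0 : 0 ≤ min r (g - d + r - 1))
    (hb : ∀ ℓ, 0 ≤ ℓ → ℓ ≤ min r (g - d + r - 1) → rho g (r - ℓ) d - ℓ * k ≤ B) :
    rhoK g r d k ≤ B := by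
  apply csSup_le
  · exact ⟨_, Set.mem_image_of_mem _ (Set.mem_Icc.2 ⟨le_refl (0:ℤ), h0⟩)⟩
  · rintro x ⟨ℓ, hℓ, rfl⟩
    exact hb ℓ (Set.mem_Icc.1 hℓ).1 (Set.mem_Icc.1 hℓ).2

lemma kappa_eq (g r d K : ℤ) (hK : 1 ≤ K) (hmem : 0 ≤ rhoK g r d K)
    (hub : ∀ k, K < k → rhoK g r d k < 0) : kappa g r d = K := by
  apply IsGreatest.csSup_eq
  exact ⟨⟨hK, hmem⟩, fun k hk => not_lt.1 fun h => absurd hk.2 (not_le.2 (hub k h))⟩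

lemma kappa1 (α : ℤ) (hα : 3 ≤ α) :
    kappa (α ^ 2 - 2) (α - 1) (α ^ 2 - 3) = 2 * α - 3 := by
  apply kappa_eq _ _ _ _ (by linarith)
  · have h := rhoK_ge (α ^ 2 - 2) (α - 1) (α ^ 2 - 3) (2 * α - 3) 1 (by norm_num)
      (le_min (by linarith) (by linarith))
    have hv : rho (α ^ 2 - 2) (α - 1 - 1) (α ^ 2 - 3) - 1 * (2 * α - 3) = 0 := by
      simp only [rho]; ring
    linarith
  · intro k hk
    have h := rhoK_le (α ^ 2 - 2) (α - 1) (α ^ 2 - 3) k (-1)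
      (le_min (by linarith) (by linarith)) ?_
    · linarith
    · intro ℓ h0 h1
      have h1' : ℓ ≤ α - 1 := le_trans h1 (min_le_left _ _)
      simp only [rho]
      nlinarith [sq_nonneg (ℓ - 1), mul_nonneg h0 (by linarith : (0:ℤ) ≤ k - (2*α-2))]

lemma kappa2 (α : ℤ) (hα : 3 ≤ α) :
    kappa (α ^ 2 - 2) (α - 2) (α ^ 2 - 5) = 2 * α - 2 := by
  apply kappa_eq _ _ _ _ (by linarith)
  · have h := rhoK_ge (α ^ 2 - 2) (α - 2) (α ^ 2 - 5) (2 * α - 2) 1 (by norm_num)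
      (le_min (by linarith) (by linarith))
    have hv : rho (α ^ 2 - 2) (α - 2 - 1) (α ^ 2 - 5) - 1 * (2 * α - 2) = 0 := by
      simp only [rho]; ring
    linarith
  · intro k hk
    have h := rhoK_le (α ^ 2 - 2) (α - 2) (α ^ 2 - 5) k (-1)
      (le_min (by linarith) (by linarith)) ?_
    · linarith
    · intro ℓ h0 h1
      have h1' : ℓ ≤ α - 2 := le_trans h1 (min_le_left _ _)
      simp only [rho]
      nlinarith [mul_nonneg h0 h0, mul_nonneg h0 (by linarith : (0:ℤ) ≤ k - (2*α-1))]

theorem stmt19 (α : ℤ) (hα : 3 ≤ α) :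
    kappa (α ^ 2 - 2) (α - 1) (α ^ 2 - 3) = 2 * α - 3 ∧
    kappa (α ^ 2 - 2) (α - 2) (α ^ 2 - 5) = 2 * α - 2 ∧
    kappa (α ^ 2 - 2) (α - 1) (α ^ 2 - 3) < kappa (α ^ 2 - 2) (α - 2) (α ^ 2 - 5) := by
  refine ⟨kappa1 α hα, kappa2 α hα, ?_⟩
  rw [kappa1 α hα, kappa2 α hα]; linarith
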